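/- Let v₁,...,vₙ be a basis of ℚⁿ and let V ⊆ ℚⁿ be a subspace of dimension d < n. Then there exists a subset J ⊆ {1,...,n} such that: (1) W = span{v_j : j ∈ J} is in direct sum with V; (2) for every l ∈ {1,...,n} \ J, the subspace D_l = V ∩ span{v_j : j ∈ J ∪ {l}} has dimension 1; and (3) V is the direct sum of the D_l over l ∈ {1,...,n} \ J. -/

import Mathlib

theorem stmt1 (n d : ℕ) (hd : d < n)
    (v : Fin n → (Fin n → ℚ))
    (hv : LinearIndependent ℚ v)
    (hspan : Submodule.span ℚ (Set.range v) = ⊤)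
    (V : Submodule ℚ (Fin n → ℚ)) (hV : Module.finrank ℚ V = d) :
    ∃ J : Finset (Fin n),
      (Submodule.span ℚ (v '' (J : Set (Fin n))) ⊓ V = ⊥) ∧
      (∀ l ∉ J,
        Module.finrank ℚ
          (V ⊓ Submodule.span ℚ (v '' (insert l (J : Set (Fin n)))) : Submodule ℚ (Fin n → ℚ)) = 1) ∧
      iSupIndep (fun l : {l : Fin n // l ∉ J} =>
        V ⊓ Submodule.span ℚ (v '' (insert l.1 (J : Set (Fin n))))) ∧
      (⨆ l : {l : Fin n // l ∉ J},
        V ⊓ Submodule.span ℚ (v '' (insert l.1 (J : Set (Fin n))))) = V := by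
  classical
  set b : Module.Basis (Fin n) ℚ (Fin n → ℚ) := Module.Basis.mk hv hspan.ge with hb
  have hbv : ∀ j, b j = v j := fun j => by rw [hb, Module.Basis.mk_apply]
  obtain ⟨S, hSV, hSspan, hSind⟩ := exists_linearIndependent ℚ (V : Set (Fin n → ℚ))
  have hSV' : Submodule.span ℚ S = V := by rw [hSspan, Submodule.span_eq]
  obtain ⟨B, hBt, hSB, htB, hBind⟩ :=
    exists_linearIndepOn_id_extension hSind
      (Set.subset_union_left : S ⊆ S ∪ Set.range v)
  have hBtop : Submodule.span ℚ B = ⊤ := by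
    rw [← top_le_iff, ← hspan]
    exact Submodule.span_le.2 fun x hx => htB (Or.inr hx)
  set J : Finset (Fin n) := Finset.univ.filter (fun j => v j ∈ B \ S) with hJ
  have hJmem : ∀ j, j ∈ J ↔ v j ∈ B \ S := fun j => by simp [hJ]
  have hJimg : v '' (J : Set (Fin n)) = B \ S := by
    apply Set.Subset.antisymm
    · rintro _ ⟨j, hj, rfl⟩
      exact (hJmem j).1 hj
    · rintro x hx
      rcases hBt hx.1 with hxS | ⟨j, rfl⟩
      · exact absurd hxS hx.2
      · exact ⟨j, by exact_mod_cast (hJmem j).2 hx, rfl⟩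
  set W : Submodule ℚ (Fin n → ℚ) := Submodule.span ℚ (v '' (J : Set (Fin n))) with hW
  have hWspan : W = Submodule.span ℚ (B \ S) := by rw [hW, hJimg]
  have hdisj : Disjoint V W := by
    rw [hWspan, ← hSV']
    have := (show LinearIndependent ℚ ((↑) : B → (Fin n → ℚ)) from hBind).disjoint_span_image
      (s := (↑) ⁻¹' S) (t := (↑) ⁻¹' (B \ S))
      (Set.disjoint_sdiff_right.preimage _)
    rwa [Subtype.image_preimage_coe, Subtype.image_preimage_coe,
      Set.inter_eq_right.2 hSB, Set.inter_eq_right.2 Set.diff_subset] at this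
  have hcodisj : V ⊔ W = ⊤ := by
    rw [hWspan, ← hSV', ← Submodule.span_union, Set.union_diff_cancel hSB, hBtop]
  have hcompl : IsCompl V W := ⟨hdisj, codisjoint_iff.2 hcodisj⟩
  set q : (Fin n → ℚ) →ₗ[ℚ] (Fin n → ℚ) :=
    V.subtype ∘ₗ V.linearProjOfIsCompl W hcompl with hq
  have hq_mem : ∀ x, q x ∈ V := fun x => (V.linearProjOfIsCompl W hcompl x).2
  have hq_left : ∀ x ∈ V, q x = x := fun x hx => by
    have := Submodule.linearProjOfIsCompl_apply_left hcompl ⟨x, hx⟩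
    exact congrArg (Submodule.subtype V) this
  have hq_right : ∀ x ∈ W, q x = 0 := fun x hx => by
    have := Submodule.linearProjOfIsCompl_apply_right' hcompl hx
    exact (congrArg (Submodule.subtype V) this).trans (map_zero _)
  have hq_sub : ∀ x, x - q x ∈ W := fun x => by
    have h1 := Submodule.projection_add_projection_eq_self hcompl x
    have h2 : x - q x = (W.linearProjOfIsCompl V hcompl.symm x : Fin n → ℚ) := by
      rw [sub_eq_iff_eq_add']; exact h1.symm
    rw [h2]; exact (W.linearProjOfIsCompl V hcompl.symm x).2
  -- coordinate functionals vanish on spans of other basis vectors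
  have hc_span : ∀ (A : Set (Fin n)) (l : Fin n), l ∉ A →
      Submodule.span ℚ (v '' A) ≤ LinearMap.ker (b.coord l) := by
    intro A l hl
    rw [Submodule.span_le]
    rintro _ ⟨a, haA, rfl⟩
    have : b.coord l (b a) = 0 := by
      simp [Module.Basis.coord_apply, Module.Basis.repr_self,
        Finsupp.single_eq_of_ne' (fun h : a = l => hl (h ▸ haA))]
    simpa [hbv a] using this
  have hcl : ∀ l : Fin n, b.coord l (v l) = 1 := fun l => by
    rw [← hbv]; simp [Module.Basis.coord_apply, Module.Basis.repr_self]
  -- the local spaces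
  set U : Fin n → Submodule ℚ (Fin n → ℚ) :=
    fun l => Submodule.span ℚ (v '' (insert l (J : Set (Fin n)))) with hU
  set D : Fin n → Submodule ℚ (Fin n → ℚ) := fun l => V ⊓ U l with hD
  have hWU : ∀ l, W ≤ U l := fun l =>
    Submodule.span_mono (Set.image_mono (Set.subset_insert _ _))
  -- key injectivity: nonzero elements of D l have nonzero l-coordinate
  have hker : ∀ l, l ∉ J → ∀ x ∈ D l, b.coord l x = 0 → x = 0 := by
    intro l hl x hx hcx
    have hxU : x ∈ Submodule.span ℚ (v '' (insert l (J : Set (Fin n)))) := hx.2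
    rw [Set.image_insert_eq] at hxU
    rcases Submodule.mem_span_insert.1 hxU with ⟨c, w, hw, rfl⟩
    have hcw : b.coord l w = 0 := hc_span (J : Set (Fin n)) l (by simpa using hl) hw
    have : c = 0 := by
      have := hcx
      rw [map_add, map_smul, hcl l, hcw, smul_eq_mul, mul_one, add_zero] at this
      exact this
    subst this
    rw [zero_smul, zero_add] at hx ⊢
    exact (Submodule.disjoint_def.1 hdisj w hx.1 hw)
  -- q (v l) is a nonzero element of D l for l ∉ J
  have hqv_mem : ∀ l, l ∉ J → q (v l) ∈ D l := by
    intro l hl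
    refine ⟨hq_mem _, ?_⟩
    have h1 : v l ∈ U l := Submodule.subset_span ⟨l, Set.mem_insert _ _, rfl⟩
    have h2 : v l - q (v l) ∈ U l := hWU l (hq_sub (v l))
    simpa using Submodule.sub_mem _ h1 h2
  have hqv_ne : ∀ l, l ∉ J → q (v l) ≠ 0 := by
    intro l hl h0
    have : v l - q (v l) ∈ W := hq_sub (v l)
    rw [h0, sub_zero] at this
    exact hv.notMem_span_image (by simpa using hl) this
  -- D l is the line through q (v l)
  have hDspan : ∀ l, l ∉ J → D l = Submodule.span ℚ {q (v l)} := by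
    intro l hl
    have hc0 : b.coord l (q (v l)) ≠ 0 := fun h =>
      hqv_ne l hl (hker l hl _ (hqv_mem l hl) h)
    apply le_antisymm
    · intro x hx
      set c := b.coord l x with hc
      have hy : x - (c / b.coord l (q (v l))) • q (v l) ∈ D l :=
        Submodule.sub_mem _ hx (Submodule.smul_mem _ _ (hqv_mem l hl))
      have hcy : b.coord l (x - (c / b.coord l (q (v l))) • q (v l)) = 0 := by
        rw [map_sub, map_smul, smul_eq_mul, div_mul_cancel₀ _ hc0, sub_self]
      have := hker l hl _ hy hcy
      have hx' : x = (c / b.coord l (q (v l))) • q (v l) := by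
        rwa [sub_eq_zero] at this
      rw [hx']
      exact Submodule.smul_mem _ _ (Submodule.mem_span_singleton_self _)
    · rw [Submodule.span_le, Set.singleton_subset_iff]
      exact hqv_mem l hl
  refine ⟨J, ?_, ?_, ?_, ?_⟩
  · rw [inf_comm]
    exact hdisj.eq_bot
  · intro l hl
    rw [show (V ⊓ Submodule.span ℚ (v '' (insert l (J : Set (Fin n)))) : Submodule ℚ (Fin n → ℚ)) = D l from rfl,
      hDspan l hl]
    exact finrank_span_singleton (hqv_ne l hl)
  · rw [iSupIndep_def]
    intro i
    rw [Submodule.disjoint_def]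
    intro x hxi hxsup
    have hxker : x ∈ LinearMap.ker (b.coord i.1) := by
      revert hxsup
      refine fun hxsup => ?_
      have hle : (⨆ j : {l : Fin n // l ∉ J}, ⨆ _ : j ≠ i,
          V ⊓ Submodule.span ℚ (v '' (insert j.1 (J : Set (Fin n))))) ≤
          LinearMap.ker (b.coord i.1) := by
        refine iSup_le fun j => iSup_le fun hji => le_trans inf_le_right ?_
        refine hc_span _ _ ?_
        rintro (h | h)
        · exact hji (Subtype.ext h.symm)
        · exact i.2 (by simpa using h)
      exact hle hxsup
    exact hker i.1 i.2 x hxi hxker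
  · apply le_antisymm
    · exact iSup_le fun l => inf_le_left
    · intro y hy
      have hrepr : ∑ j, b.repr y j • v j = y := by
        conv_rhs => rw [← Module.Basis.sum_repr b y]
        exact Finset.sum_congr rfl fun j _ => by rw [hbv]
      have hqy : y = ∑ j, b.repr y j • q (v j) := by
        conv_lhs => rw [← hq_left y hy, ← hrepr]
        rw [map_sum]
        exact Finset.sum_congr rfl fun j _ => by rw [map_smul]
      rw [hqy]
      refine Submodule.sum_mem _ fun j _ => ?_
      by_cases hj : j ∈ J
      · have : q (v j) = 0 := hq_right _ (Submodule.subset_span ⟨j, hj, rfl⟩)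
        rw [this, smul_zero]
        exact Submodule.zero_mem _
      · exact Submodule.smul_mem _ _
          (le_iSup (fun l : {l : Fin n // l ∉ J} =>
            V ⊓ Submodule.span ℚ (v '' (insert l.1 (J : Set (Fin n))))) ⟨j, hj⟩
            (hqv_mem j hj))
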